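/- If G' is an ε-approximation of a connected network G (i.e., for all z ∈ ℝⁿ, (1/(1+ε)) zᵀ L_G z ≤ zᵀ L_{G'} z ≤ (1+ε) zᵀ L_G z with both Laplacians having kernel spanned by the all-ones vector), then for all z ∈ ℝⁿ, (1/(1+ε)) zᵀ L_G^# z ≤ zᵀ L_{G'}^# z ≤ (1+ε) zᵀ L_G^# z. -/

import Mathlib

open Matrix

/-- For a symmetric matrix, the quadratic pairing can be moved across. -/
private lemma symm_dot {n : ℕ} (A : Matrix (Fin n) (Fin n) ℝ) (hA : Aᵀ = A)
    (v w : Fin n → ℝ) : v ⬝ᵥ A.mulVec w = A.mulVec v ⬝ᵥ w := by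
  rw [Matrix.dotProduct_mulVec, ← Matrix.mulVec_transpose, hA]

/-- Uniqueness of the group inverse. -/
private lemma gi_unique {n : ℕ} (A X Y : Matrix (Fin n) (Fin n) ℝ)
    (hX1 : A * X * A = A) (hX2 : X * A * X = X) (hX3 : A * X = X * A)
    (hY1 : A * Y * A = A) (_hY2 : Y * A * Y = Y) (hY3 : A * Y = Y * A) : X = Y := by
  have c1 : X * A = (X * A) * (Y * A) := by
    calc X * A = X * (A * Y * A) := by rw [hY1]
    _ = (X * A) * (Y * A) := by noncomm_ring
  have c2 : Y * A = (X * A) * (Y * A) := by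
    calc Y * A = A * Y := hY3.symm
    _ = (A * X * A) * Y := by rw [hX1]
    _ = (A * X) * (A * Y) := by noncomm_ring
    _ = (X * A) * (Y * A) := by rw [hX3, hY3]
  have key : X * A = Y * A := c1.trans c2.symm
  calc X = X * A * X := hX2.symm
  _ = X * (A * X) := by noncomm_ring
  _ = X * (A * Y) := by rw [hX3, key, ← hY3]
  _ = (X * A) * Y := by noncomm_ring
  _ = (Y * A) * Y := by rw [key]
  _ = Y := _hY2

/-- The group inverse of a symmetric matrix is symmetric. -/
private lemma gi_symm {n : ℕ} (A Ap : Matrix (Fin n) (Fin n) ℝ) (hA : Aᵀ = A)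
    (h1 : A * Ap * A = A) (h2 : Ap * A * Ap = Ap) (h3 : A * Ap = Ap * A) :
    Apᵀ = Ap := by
  have e1 : A * Apᵀ * A = A := by
    have := congrArg Matrix.transpose h1
    simpa [Matrix.transpose_mul, hA, mul_assoc] using this
  have e2 : Apᵀ * A * Apᵀ = Apᵀ := by
    have := congrArg Matrix.transpose h2
    simpa [Matrix.transpose_mul, hA, mul_assoc] using this
  have e3 : A * Apᵀ = Apᵀ * A := by
    have := congrArg Matrix.transpose h3
    simp only [Matrix.transpose_mul, hA] at this
    exact this.symm
  exact gi_unique A Apᵀ Ap e1 e2 e3 h1 h2 h3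

/-- The group inverse kills constant vectors. -/
private lemma gi_const {n : ℕ} (A Ap : Matrix (Fin n) (Fin n) ℝ)
    (hker : ∀ z : Fin n → ℝ, A.mulVec z = 0 ↔ ∃ t : ℝ, z = fun _ => t)
    (h2 : Ap * A * Ap = Ap) (h3 : A * Ap = Ap * A) (t : ℝ) :
    Ap.mulVec (fun _ => t) = 0 := by
  have hc : A.mulVec (fun _ => t) = 0 := (hker _).mpr ⟨t, rfl⟩
  have hmid : A.mulVec (Ap.mulVec fun _ => t) = 0 := by
    rw [Matrix.mulVec_mulVec, h3, ← Matrix.mulVec_mulVec, hc, Matrix.mulVec_zero]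
  calc Ap.mulVec (fun _ => t)
      = Ap.mulVec (A.mulVec (Ap.mulVec fun _ => t)) := by
        rw [Matrix.mulVec_mulVec, Matrix.mulVec_mulVec, h2]
    _ = 0 := by rw [hmid, Matrix.mulVec_zero]

/-- Variational lower bound for the group-inverse quadratic form. -/
private lemma var_le {n : ℕ} (A Ap : Matrix (Fin n) (Fin n) ℝ) (hA : Aᵀ = A)
    (hApT : Apᵀ = Ap) (h2 : Ap * A * Ap = Ap)
    (psd : ∀ x : Fin n → ℝ, 0 ≤ x ⬝ᵥ A.mulVec x) (y z : Fin n → ℝ) :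
    2 * (y ⬝ᵥ (A * Ap).mulVec z) - y ⬝ᵥ A.mulVec y ≤ z ⬝ᵥ Ap.mulVec z := by
  have h0 := psd (y - Ap.mulVec z)
  have f1 : y ⬝ᵥ A.mulVec (Ap.mulVec z) = y ⬝ᵥ (A * Ap).mulVec z := by
    rw [Matrix.mulVec_mulVec]
  have f2 : (Ap.mulVec z) ⬝ᵥ A.mulVec y = y ⬝ᵥ (A * Ap).mulVec z := by
    rw [symm_dot A hA, Matrix.mulVec_mulVec, dotProduct_comm]
  have f3 : (Ap.mulVec z) ⬝ᵥ A.mulVec (Ap.mulVec z) = z ⬝ᵥ Ap.mulVec z := by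
    rw [← symm_dot Ap hApT, Matrix.mulVec_mulVec, Matrix.mulVec_mulVec, h2]
  rw [Matrix.mulVec_sub, sub_dotProduct, dotProduct_sub,
    dotProduct_sub, f1, f2, f3] at h0
  linarith

/-- The variational bound is attained at `y = Ap z`. -/
private lemma var_eq {n : ℕ} (A Ap : Matrix (Fin n) (Fin n) ℝ)
    (hApT : Apᵀ = Ap) (h2 : Ap * A * Ap = Ap) (z : Fin n → ℝ) :
    z ⬝ᵥ Ap.mulVec z =
      2 * ((Ap.mulVec z) ⬝ᵥ (A * Ap).mulVec z)
        - (Ap.mulVec z) ⬝ᵥ A.mulVec (Ap.mulVec z) := by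
  have f3 : (Ap.mulVec z) ⬝ᵥ A.mulVec (Ap.mulVec z) = z ⬝ᵥ Ap.mulVec z := by
    rw [← symm_dot Ap hApT, Matrix.mulVec_mulVec, Matrix.mulVec_mulVec, h2]
  have f4 : (Ap.mulVec z) ⬝ᵥ (A * Ap).mulVec z = z ⬝ᵥ Ap.mulVec z := by
    rw [← symm_dot Ap hApT, Matrix.mulVec_mulVec, ← mul_assoc, h2]
  rw [f3, f4]; ring

/-- One-sided comparison of group-inverse quadratic forms. -/
private lemma side {n : ℕ} (A Ap B Bp : Matrix (Fin n) (Fin n) ℝ)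
    (hA : Aᵀ = A) (hApT : Apᵀ = Ap) (h2A : Ap * A * Ap = Ap)
    (psdA : ∀ x : Fin n → ℝ, 0 ≤ x ⬝ᵥ A.mulVec x)
    (hBpT : Bpᵀ = Bp) (h2B : Bp * B * Bp = Bp)
    (hP : ∀ z : Fin n → ℝ, (B * Bp).mulVec z = (A * Ap).mulVec z)
    (c : ℝ) (hc : 0 < c)
    (hq : ∀ y : Fin n → ℝ, (1 / c) * (y ⬝ᵥ A.mulVec y) ≤ y ⬝ᵥ B.mulVec y)
    (z : Fin n → ℝ) : z ⬝ᵥ Bp.mulVec z ≤ c * (z ⬝ᵥ Ap.mulVec z) := by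
  set y := Bp.mulVec z with hy
  have hBeq : z ⬝ᵥ Bp.mulVec z =
      2 * (y ⬝ᵥ (A * Ap).mulVec z) - y ⬝ᵥ B.mulVec y := by
    rw [var_eq B Bp hBpT h2B z, hP z]
  have hvar := var_le A Ap hA hApT h2A psdA (c⁻¹ • y) z
  have e1 : (c⁻¹ • y) ⬝ᵥ (A * Ap).mulVec z = c⁻¹ * (y ⬝ᵥ (A * Ap).mulVec z) := by
    rw [smul_dotProduct]; rfl
  have e2 : (c⁻¹ • y) ⬝ᵥ A.mulVec (c⁻¹ • y) = c⁻¹ * (c⁻¹ * (y ⬝ᵥ A.mulVec y)) := by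
    rw [Matrix.mulVec_smul, smul_dotProduct, dotProduct_smul]
    simp only [smul_eq_mul]
  rw [e1, e2] at hvar
  have hcc : c * c⁻¹ = 1 := mul_inv_cancel₀ hc.ne'
  have hvar' : 2 * (y ⬝ᵥ (A * Ap).mulVec z) - c⁻¹ * (y ⬝ᵥ A.mulVec y)
      ≤ c * (z ⬝ᵥ Ap.mulVec z) := by
    have h5 := mul_le_mul_of_nonneg_left hvar hc.le
    have h6 : c * (2 * (c⁻¹ * (y ⬝ᵥ (A * Ap).mulVec z))
        - c⁻¹ * (c⁻¹ * (y ⬝ᵥ A.mulVec y)))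
        = (c * c⁻¹) * (2 * (y ⬝ᵥ (A * Ap).mulVec z))
          - (c * c⁻¹) * (c⁻¹ * (y ⬝ᵥ A.mulVec y)) := by ring
    rw [h6, hcc] at h5
    linarith
  have hqy := hq y
  rw [one_div] at hqy
  linarith

theorem group_inverse_eps_approximation {n : ℕ} (ε : ℝ) (hε : 0 < ε)
    (L L' Lp Lp' : Matrix (Fin n) (Fin n) ℝ)
    (hL : L.PosSemidef) (hL' : L'.PosSemidef)
    (hker : ∀ z : Fin n → ℝ, L.mulVec z = 0 ↔ ∃ t : ℝ, z = fun _ => t)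
    (hker' : ∀ z : Fin n → ℝ, L'.mulVec z = 0 ↔ ∃ t : ℝ, z = fun _ => t)
    (hg1 : L * Lp * L = L) (hg2 : Lp * L * Lp = Lp) (hg3 : L * Lp = Lp * L)
    (hg1' : L' * Lp' * L' = L') (hg2' : Lp' * L' * Lp' = Lp') (hg3' : L' * Lp' = Lp' * L')
    (happrox : ∀ z : Fin n → ℝ,
      (1/(1+ε)) * (z ⬝ᵥ L.mulVec z) ≤ z ⬝ᵥ L'.mulVec z ∧
        z ⬝ᵥ L'.mulVec z ≤ (1+ε) * (z ⬝ᵥ L.mulVec z)) :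
    ∀ z : Fin n → ℝ,
      (1/(1+ε)) * (z ⬝ᵥ Lp.mulVec z) ≤ z ⬝ᵥ Lp'.mulVec z ∧
        z ⬝ᵥ Lp'.mulVec z ≤ (1+ε) * (z ⬝ᵥ Lp.mulVec z) := by
  have h1e : (0:ℝ) < 1 + ε := by linarith
  have hLs : Lᵀ = L := hL.1.eq
  have hLs' : L'ᵀ = L' := hL'.1.eq
  have psd : ∀ x : Fin n → ℝ, 0 ≤ x ⬝ᵥ L.mulVec x := fun x => by
    simpa using hL.dotProduct_mulVec_nonneg x
  have psd' : ∀ x : Fin n → ℝ, 0 ≤ x ⬝ᵥ L'.mulVec x := fun x => by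
    simpa using hL'.dotProduct_mulVec_nonneg x
  have hLpT : Lpᵀ = Lp := gi_symm L Lp hLs hg1 hg2 hg3
  have hLpT' : Lp'ᵀ = Lp' := gi_symm L' Lp' hLs' hg1' hg2' hg3'
  -- the projections agree
  have hP : ∀ z : Fin n → ℝ, (L' * Lp').mulVec z = (L * Lp).mulVec z := by
    intro z
    -- z - P z is constant
    have hLP : ∀ v : Fin n → ℝ, L.mulVec ((L * Lp).mulVec v) = L.mulVec v := by
      intro v
      have hLLp : L * L * Lp = L := by rw [mul_assoc, hg3, ← mul_assoc, hg1]
      rw [Matrix.mulVec_mulVec, ← mul_assoc, hLLp]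
    have hLP' : ∀ v : Fin n → ℝ, L'.mulVec ((L' * Lp').mulVec v) = L'.mulVec v := by
      intro v
      have hLLp' : L' * L' * Lp' = L' := by rw [mul_assoc, hg3', ← mul_assoc, hg1']
      rw [Matrix.mulVec_mulVec, ← mul_assoc, hLLp']
    obtain ⟨t, ht⟩ := (hker (z - (L * Lp).mulVec z)).mp
      (by rw [Matrix.mulVec_sub, hLP, sub_self])
    obtain ⟨t', ht'⟩ := (hker' (z - (L' * Lp').mulVec z)).mp
      (by rw [Matrix.mulVec_sub, hLP', sub_self])
    -- P z is orthogonal to the all-ones vector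
    have hPsym : (L * Lp)ᵀ = L * Lp := by
      rw [Matrix.transpose_mul, hLpT, hLs, ← hg3]
    have hPsym' : (L' * Lp')ᵀ = L' * Lp' := by
      rw [Matrix.transpose_mul, hLpT', hLs', ← hg3']
    have hdot : ((L * Lp).mulVec z) ⬝ᵥ (fun _ => (1:ℝ)) = 0 := by
      rw [← symm_dot (L * Lp) hPsym, ← Matrix.mulVec_mulVec,
        gi_const L Lp hker hg2 hg3 1, Matrix.mulVec_zero, dotProduct_zero]
    have hdot' : ((L' * Lp').mulVec z) ⬝ᵥ (fun _ => (1:ℝ)) = 0 := by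
      rw [← symm_dot (L' * Lp') hPsym', ← Matrix.mulVec_mulVec,
        gi_const L' Lp' hker' hg2' hg3' 1, Matrix.mulVec_zero, dotProduct_zero]
    funext i
    have hzi := congrFun ht i
    have hzi' := congrFun ht' i
    simp only [Pi.sub_apply] at hzi hzi'
    -- compare the constants via the dot products
    have hdsum : ((L * Lp).mulVec z - (L' * Lp').mulVec z) ⬝ᵥ (fun _ => (1:ℝ)) = 0 := by
      rw [sub_dotProduct, hdot, hdot', sub_self]
    have hdconst : (L * Lp).mulVec z - (L' * Lp').mulVec z = fun _ => t' - t := by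
      funext j
      have h1 := congrFun ht j
      have h2 := congrFun ht' j
      simp only [Pi.sub_apply] at h1 h2 ⊢
      linarith
    rw [hdconst] at hdsum
    have hsum : (fun _ => t' - t : Fin n → ℝ) ⬝ᵥ (fun _ => (1:ℝ))
        = (n : ℝ) * (t' - t) := by
      simp [dotProduct, Finset.sum_const, mul_comm]
      ring
    rw [hsum] at hdsum
    have hn : (n : ℝ) ≠ 0 := by
      have := i.pos
      positivity
    have htt : t = t' := by
      have := mul_eq_zero.mp hdsum
      rcases this with h | h
      · exact absurd h hn
      · linarith
    linarith
  intro z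
  constructor
  · -- lower bound:  z Lp z ≤ (1+ε) z Lp' z
    have h := side L' Lp' L Lp hLs' hLpT' hg2' psd' hLpT hg2
      (fun w => (hP w).symm) (1 + ε) h1e
      (fun y => by
        have := (happrox y).2
        have h7 : (1 / (1 + ε)) * (y ⬝ᵥ L'.mulVec y)
            ≤ (1 / (1 + ε)) * ((1 + ε) * (y ⬝ᵥ L.mulVec y)) :=
          mul_le_mul_of_nonneg_left this (by positivity)
        have h8 : (1 / (1 + ε)) * ((1 + ε) * (y ⬝ᵥ L.mulVec y)) = y ⬝ᵥ L.mulVec y := by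
          field_simp
        linarith) z
    -- h : z Lp z ≤ (1+ε) * z Lp' z
    have h9 : (1 / (1 + ε)) * (z ⬝ᵥ Lp.mulVec z)
        ≤ (1 / (1 + ε)) * ((1 + ε) * (z ⬝ᵥ Lp'.mulVec z)) :=
      mul_le_mul_of_nonneg_left h (by positivity)
    have h10 : (1 / (1 + ε)) * ((1 + ε) * (z ⬝ᵥ Lp'.mulVec z)) = z ⬝ᵥ Lp'.mulVec z := by
      field_simp
    linarith
  · exact side L Lp L' Lp' hLs hLpT hg2 psd hLpT' hg2' hP (1 + ε) h1e
      (fun y => (happrox y).1) z
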